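/- Let Φ be a quantum channel on an n-dimensional Hilbert space and define Ψ(ρ ⊗ |i⟩⟨i|) = X_i Φ(ρ) X_i†, extended linearly, where X₀,…,X_{n²−1} are the generalized Pauli (Heisenberg–Weyl) operators. Then the Holevo capacity satisfies χ(Ψ) = log n − min_ρ H(Φ(ρ)). -/

import Mathlib

open Matrix ComplexOrder

/-- A density operator: positive semidefinite with trace 1. -/
def IsDensity {d : Type*} [Fintype d] (ρ : Matrix d d ℂ) : Prop :=
  ρ.PosSemidef ∧ ρ.trace = 1

/-- The channel with Kraus operators `E k`. -/
noncomputable def krausChannel {n r : ℕ} (E : Fin r → Matrix (Fin n) (Fin n) ℂ)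
    (ρ : Matrix (Fin n) (Fin n) ℂ) : Matrix (Fin n) (Fin n) ℂ :=
  ∑ k, E k * ρ * (E k)ᴴ

/-- Von Neumann entropy via eigenvalues (junk value `0` for non-Hermitian input). -/
noncomputable def vnEntropy {d : Type*} [Fintype d] [DecidableEq d]
    (ρ : Matrix d d ℂ) : ℝ :=
  if h : ρ.IsHermitian then -∑ i, h.eigenvalues i * Real.log (h.eigenvalues i) else 0

/-- The Holevo capacity of a channel `Φ`. -/
noncomputable def holevoCap {d e : Type*} [Fintype d] [Fintype e] [DecidableEq e]
    (Φ : Matrix d d ℂ → Matrix e e ℂ) : ℝ :=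
  sSup {x : ℝ | ∃ (m : ℕ) (p : Fin m → ℝ) (ρ : Fin m → Matrix d d ℂ),
    (∀ i, 0 ≤ p i) ∧ (∑ i, p i = 1) ∧ (∀ i, IsDensity (ρ i)) ∧
    x = vnEntropy (∑ i, (p i : ℂ) • Φ (ρ i)) - ∑ i, p i * vnEntropy (Φ (ρ i))}

/-- The cyclic shift `T|j⟩ = |j+1 mod n⟩`. -/
def shiftT (n : ℕ) [NeZero n] : Matrix (Fin n) (Fin n) ℂ :=
  Matrix.of fun i j => if i = j + 1 then 1 else 0

/-- The phase operator `R|j⟩ = e^{2πij/n}|j⟩`. -/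
noncomputable def phaseR (n : ℕ) [NeZero n] : Matrix (Fin n) (Fin n) ℂ :=
  Matrix.diagonal fun j => Complex.exp (2 * Real.pi * Complex.I * (j : ℕ) / n)

/-- The generalized Pauli (Heisenberg–Weyl) operator `X_{mn+d} = T^m R^d`. -/
noncomputable def genPauli {n : ℕ} [NeZero n] (md : Fin n × Fin n) :
    Matrix (Fin n) (Fin n) ℂ :=
  shiftT n ^ (md.1 : ℕ) * phaseR n ^ (md.2 : ℕ)

/-- The `(i,i)` block of an operator on `H ⊗ ℂ^{n²}`. -/
noncomputable def blockAt {n : ℕ} (i : Fin n × Fin n)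
    (ρ : Matrix (Fin n × (Fin n × Fin n)) (Fin n × (Fin n × Fin n)) ℂ) :
    Matrix (Fin n) (Fin n) ℂ :=
  Matrix.of fun a b => ρ (a, i) (b, i)

/-- The channel `Ψ(ρ ⊗ |i⟩⟨i|) = X_i Φ(ρ) X_i†`, extended linearly
(off-diagonal blocks of the classical register are discarded). -/
noncomputable def pauliMixChannel {n r : ℕ} [NeZero n]
    (E : Fin r → Matrix (Fin n) (Fin n) ℂ)
    (ρ : Matrix (Fin n × (Fin n × Fin n)) (Fin n × (Fin n × Fin n)) ℂ) :
    Matrix (Fin n) (Fin n) ℂ :=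
  ∑ i : Fin n × Fin n, genPauli i * krausChannel E (blockAt i ρ) * (genPauli i)ᴴ


section Helpers
open Finset

set_option linter.unusedSectionVars false

variable {d : Type*} [Fintype d] [DecidableEq d]

lemma psd_smul' {c : ℝ} (hc : 0 ≤ c) {M : Matrix d d ℂ} (hM : M.PosSemidef) :
    ((c : ℂ) • M).PosSemidef := by
  refine Matrix.PosSemidef.of_dotProduct_mulVec_nonneg ?_ ?_
  · unfold Matrix.IsHermitian
    rw [conjTranspose_smul, hM.1.eq, Complex.star_def, Complex.conj_ofReal]
  · intro x
    rw [smul_mulVec, dotProduct_smul, smul_eq_mul]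
    exact mul_nonneg (by exact_mod_cast hc) (hM.dotProduct_mulVec_nonneg x)

lemma psd_sum' {ι : Type*} (s : Finset ι) (f : ι → Matrix d d ℂ)
    (hf : ∀ i ∈ s, (f i).PosSemidef) : (∑ i ∈ s, f i).PosSemidef := by
  classical
  induction s using Finset.induction with
  | empty => simpa using Matrix.PosSemidef.zero
  | insert a s h ih =>
    rw [Finset.sum_insert h]
    exact (hf _ (Finset.mem_insert_self _ _)).add
      (ih fun i hi => hf i (Finset.mem_insert_of_mem hi))

lemma trace_eq_sum_eigenvalues {A : Matrix d d ℂ} (hA : A.IsHermitian) :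
    A.trace = ∑ i, (hA.eigenvalues i : ℂ) := by
  conv_lhs => rw [hA.spectral_theorem, Unitary.conjStarAlgAut_apply]
  rw [trace_mul_cycle, (Matrix.mem_unitaryGroup_iff').mp (hA.eigenvectorUnitary).2,
    one_mul, trace_diagonal]
  rfl

lemma density_sum_eigenvalues_eq_one {A : Matrix d d ℂ} (hA : IsDensity A) :
    ∑ i, hA.1.1.eigenvalues i = 1 := by
  have h := (trace_eq_sum_eigenvalues hA.1.1).symm.trans hA.2
  exact_mod_cast h

lemma vnEntropy_eq_sum_negMulLog {A : Matrix d d ℂ} (hA : A.IsHermitian) :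
    vnEntropy A = ∑ i, Real.negMulLog (hA.eigenvalues i) := by
  rw [vnEntropy, dif_pos hA, ← Finset.sum_neg_distrib]
  simp [Real.negMulLog]

lemma psd_diag_re_nonneg {M : Matrix d d ℂ} (hM : M.PosSemidef) (k : d) : 0 ≤ (M k k).re := by
  have h := hM.dotProduct_mulVec_nonneg (Pi.single k 1)
  rw [Complex.le_def] at h
  convert h.1 using 2
  simp [dotProduct, mulVec, Pi.single_apply]
  simp [Pi.star_single, single_dotProduct, mulVec_single]

/-- Core lemma: the entropy of the diagonal of `Vᴴ τ V` dominates the entropy of `τ`. -/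
lemma diag_conj_entropy {τ : Matrix d d ℂ} (hτ : IsDensity τ) (V : Matrix d d ℂ)
    (hV : V ∈ Matrix.unitaryGroup d ℂ) :
    vnEntropy τ ≤ ∑ k, Real.negMulLog ((Vᴴ * τ * V) k k).re := by
  classical
  have hH := hτ.1.1
  set U : Matrix d d ℂ := (hH.eigenvectorUnitary : Matrix d d ℂ) with hU
  set μ : d → ℝ := hH.eigenvalues with hμ
  have hμ0 : ∀ l, 0 ≤ μ l := fun l => hτ.1.eigenvalues_nonneg l
  set W : Matrix d d ℂ := Vᴴ * U with hW
  have hWU : W ∈ Matrix.unitaryGroup d ℂ := by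
    exact mul_mem (by simpa [star_eq_conjTranspose] using Unitary.star_mem hV)
      hH.eigenvectorUnitary.2
  have hrow : ∀ k, ∑ l, Complex.normSq (W k l) = 1 := by
    intro k
    have h1 := congrFun (congrFun (Matrix.mem_unitaryGroup_iff.mp hWU) k) k
    have : (∑ l, (Complex.normSq (W k l) : ℂ)) = 1 := by
      simpa [Matrix.mul_apply, Matrix.one_apply, Complex.mul_conj,
        star_eq_conjTranspose] using h1
    exact_mod_cast this
  have hcol : ∀ l, ∑ k, Complex.normSq (W k l) = 1 := by
    intro l
    have h1 := congrFun (congrFun (Matrix.mem_unitaryGroup_iff'.mp hWU) l) l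
    have : (∑ k, (Complex.normSq (W k l) : ℂ)) = 1 := by
      simpa [Matrix.mul_apply, Matrix.one_apply, Complex.mul_conj, mul_comm,
        star_eq_conjTranspose] using h1
    exact_mod_cast this
  have hentry : ∀ k, ((Vᴴ * τ * V) k k).re = ∑ l, Complex.normSq (W k l) * μ l := by
    intro k
    have hτeq : Vᴴ * τ * V = W * diagonal (RCLike.ofReal ∘ μ) * Wᴴ := by
      conv_lhs => rw [hH.spectral_theorem, Unitary.conjStarAlgAut_apply]
      simp only [hW, star_eq_conjTranspose, conjTranspose_mul, conjTranspose_conjTranspose]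
      noncomm_ring
    rw [hτeq]
    have : (W * diagonal (RCLike.ofReal ∘ μ) * Wᴴ : Matrix d d ℂ) k k
        = ∑ l, (Complex.normSq (W k l) : ℂ) * (μ l : ℂ) := by
      rw [Matrix.mul_apply]
      refine Finset.sum_congr rfl fun l _ => ?_
      rw [Matrix.mul_diagonal, conjTranspose_apply, mul_right_comm]
      have hz : W k l * star (W k l) = (Complex.normSq (W k l) : ℂ) := by
        rw [RCLike.star_def]; exact_mod_cast (Complex.mul_conj (W k l))
      rw [hz]
      rfl
    rw [this]
    push_cast
    simp
  calc vnEntropy τ = ∑ l, Real.negMulLog (μ l) := vnEntropy_eq_sum_negMulLog hH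
    _ = ∑ l, (∑ k, Complex.normSq (W k l)) * Real.negMulLog (μ l) := by
        simp [hcol]
    _ = ∑ k, ∑ l, Complex.normSq (W k l) * Real.negMulLog (μ l) := by
        rw [Finset.sum_comm]
        simp [Finset.sum_mul]
    _ ≤ ∑ k, Real.negMulLog ((Vᴴ * τ * V) k k).re := by
        apply Finset.sum_le_sum
        intro k _
        rw [hentry k]
        have := Real.concaveOn_negMulLog.le_map_sum (t := Finset.univ)
          (w := fun l => Complex.normSq (W k l)) (p := μ)
          (fun l _ => Complex.normSq_nonneg _) (hrow k) (fun l _ => hμ0 l)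
        simpa using this


lemma trace_conj {X M : Matrix d d ℂ} (hX : X ∈ Matrix.unitaryGroup d ℂ) :
    (X * M * Xᴴ).trace = M.trace := by
  rw [trace_mul_cycle, ← star_eq_conjTranspose,
    Matrix.mem_unitaryGroup_iff'.mp hX, one_mul]

lemma isDensity_conj {M : Matrix d d ℂ} (hM : IsDensity M) {X : Matrix d d ℂ}
    (hX : X ∈ Matrix.unitaryGroup d ℂ) : IsDensity (X * M * Xᴴ) :=
  ⟨hM.1.mul_mul_conjTranspose_same X, by rw [trace_conj hX, hM.2]⟩

lemma vnEntropy_eq_diag {A : Matrix d d ℂ} (hA : A.IsHermitian) :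
    vnEntropy A = ∑ k, Real.negMulLog
      (((star (hA.eigenvectorUnitary : Matrix d d ℂ)) * A
        * (hA.eigenvectorUnitary : Matrix d d ℂ)) k k).re := by
  rw [vnEntropy_eq_sum_negMulLog hA]
  refine Finset.sum_congr rfl fun k _ => ?_
  rw [← Unitary.conjStarAlgAut_star_apply (S := ℂ), hA.conjStarAlgAut_star_eigenvectorUnitary]
  simp

lemma vnEntropy_conj_le {τ X : Matrix d d ℂ} (hτ : IsDensity τ)
    (hX : X ∈ Matrix.unitaryGroup d ℂ) :
    vnEntropy τ ≤ vnEntropy (X * τ * Xᴴ) := by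
  have hD : IsDensity (X * τ * Xᴴ) := isDensity_conj hτ hX
  have hA := hD.1.1
  set U : Matrix d d ℂ := (hA.eigenvectorUnitary : Matrix d d ℂ) with hU
  have hV : Xᴴ * U ∈ Matrix.unitaryGroup d ℂ := by
    exact mul_mem (by simpa [star_eq_conjTranspose] using Unitary.star_mem hX)
      hA.eigenvectorUnitary.2
  have hrw : star U * (X * τ * Xᴴ) * U = (Xᴴ * U)ᴴ * τ * (Xᴴ * U) := by
    simp only [star_eq_conjTranspose, conjTranspose_mul, conjTranspose_conjTranspose]
    noncomm_ring
  rw [vnEntropy_eq_diag hA, hrw]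
  exact diag_conj_entropy hτ _ hV

lemma vnEntropy_conj {τ X : Matrix d d ℂ} (hτ : IsDensity τ)
    (hX : X ∈ Matrix.unitaryGroup d ℂ) :
    vnEntropy (X * τ * Xᴴ) = vnEntropy τ := by
  refine le_antisymm ?_ (vnEntropy_conj_le hτ hX)
  have hXs : Xᴴ ∈ Matrix.unitaryGroup d ℂ := by
    simpa [star_eq_conjTranspose] using Unitary.star_mem hX
  have h2 := vnEntropy_conj_le (isDensity_conj hτ hX) hXs
  have hback : Xᴴ * (X * τ * Xᴴ) * Xᴴᴴ = τ := by
    rw [conjTranspose_conjTranspose]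
    calc Xᴴ * (X * τ * Xᴴ) * X = (Xᴴ * X) * τ * (Xᴴ * X) := by noncomm_ring
      _ = τ := by
          rw [← star_eq_conjTranspose, Matrix.mem_unitaryGroup_iff'.mp hX, one_mul, mul_one]
  rwa [hback] at h2

set_option maxHeartbeats 2000000 in
/-- Concavity of von Neumann entropy. -/
lemma vnEntropy_mix {ι : Type*} (s : Finset ι) (q : ι → ℝ) (τ : ι → Matrix d d ℂ)
    (hq0 : ∀ i ∈ s, 0 ≤ q i) (hq1 : ∑ i ∈ s, q i = 1) (hτ : ∀ i ∈ s, IsDensity (τ i)) :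
    ∑ i ∈ s, q i * vnEntropy (τ i) ≤ vnEntropy (∑ i ∈ s, (q i : ℂ) • τ i) := by
  classical
  set A : Matrix d d ℂ := ∑ i ∈ s, (q i : ℂ) • τ i with hAdef
  have hApsd : A.PosSemidef := psd_sum' s _ fun i hi => psd_smul' (hq0 i hi) (hτ i hi).1
  have hA := hApsd.1
  set U : Matrix d d ℂ := (hA.eigenvectorUnitary : Matrix d d ℂ) with hU
  have hUmem := hA.eigenvectorUnitary.2
  set m : ι → d → ℝ := fun i k => ((Uᴴ * τ i * U) k k).re with hm
  have hm0 : ∀ i ∈ s, ∀ k, 0 ≤ m i k := fun i hi k =>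
    psd_diag_re_nonneg ((hτ i hi).1.conjTranspose_mul_mul_same U) k
  have hmsum : ∀ i ∈ s, ∑ k, m i k = 1 := by
    intro i hi
    have ht : (Uᴴ * τ i * U).trace = (τ i).trace := by
      have : Uᴴ * τ i * U = Uᴴ * τ i * Uᴴᴴ := by rw [conjTranspose_conjTranspose]
      rw [this]
      exact trace_conj (by simpa [star_eq_conjTranspose] using Unitary.star_mem hUmem)
    have : ((Uᴴ * τ i * U).trace).re = 1 := by rw [ht, (hτ i hi).2]; rfl
    simpa [Matrix.trace, Matrix.diag, Complex.re_sum] using this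
  have hlam : ∀ k, hA.eigenvalues k = ∑ i ∈ s, q i * m i k := by
    intro k
    have h1 : (star U * A * U) k k = RCLike.ofReal (hA.eigenvalues k) := by
      rw [← Unitary.conjStarAlgAut_star_apply (S := ℂ), hA.conjStarAlgAut_star_eigenvectorUnitary]; simp
    have h2 : (star U * A * U) k k = ∑ i ∈ s, (q i : ℂ) * ((Uᴴ * τ i * U) k k) := by
      rw [hAdef]
      rw [show star U * (∑ i ∈ s, (q i : ℂ) • τ i) * U
          = ∑ i ∈ s, (q i : ℂ) • (Uᴴ * τ i * U) by
        rw [Finset.mul_sum, Finset.sum_mul]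
        exact Finset.sum_congr rfl fun i _ => by
          rw [star_eq_conjTranspose, Matrix.mul_smul, Matrix.smul_mul]]
      simp [Matrix.sum_apply]
    have := h1.symm.trans h2
    have := congrArg Complex.re this
    simpa [Complex.re_sum, hm] using this
  have hjensen : ∀ k, ∑ i ∈ s, q i * Real.negMulLog (m i k)
      ≤ Real.negMulLog (hA.eigenvalues k) := by
    intro k
    rw [hlam k]
    have := Real.concaveOn_negMulLog.le_map_sum (t := s) (w := q) (p := fun i => m i k)
      hq0 hq1 (fun i hi => hm0 i hi k)
    simpa using this
  calc ∑ i ∈ s, q i * vnEntropy (τ i)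
      ≤ ∑ i ∈ s, q i * (∑ k, Real.negMulLog (m i k)) := by
        refine Finset.sum_le_sum fun i hi => ?_
        exact mul_le_mul_of_nonneg_left (diag_conj_entropy (hτ i hi) U hUmem) (hq0 i hi)
    _ = ∑ k, ∑ i ∈ s, q i * Real.negMulLog (m i k) := by
        rw [Finset.sum_comm]
        simp [Finset.mul_sum]
    _ ≤ ∑ k, Real.negMulLog (hA.eigenvalues k) := Finset.sum_le_sum fun k _ => hjensen k
    _ = vnEntropy A := (vnEntropy_eq_sum_negMulLog hA).symm

lemma vnEntropy_nonneg {A : Matrix d d ℂ} (hA : IsDensity A) : 0 ≤ vnEntropy A := by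
  rw [vnEntropy_eq_sum_negMulLog hA.1.1]
  refine Finset.sum_nonneg fun i _ => Real.negMulLog_nonneg (hA.1.eigenvalues_nonneg i) ?_
  calc hA.1.1.eigenvalues i ≤ ∑ j, hA.1.1.eigenvalues j :=
      Finset.single_le_sum (fun j _ => hA.1.eigenvalues_nonneg j) (Finset.mem_univ i)
    _ = 1 := density_sum_eigenvalues_eq_one hA

lemma vnEntropy_le_log [Nonempty d] {A : Matrix d d ℂ} (hA : IsDensity A) :
    vnEntropy A ≤ Real.log (Fintype.card d) := by
  set N := Fintype.card d with hN
  have hN0 : 0 < (N : ℝ) := by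
    have : 0 < N := Fintype.card_pos
    exact_mod_cast this
  rw [vnEntropy_eq_sum_negMulLog hA.1.1]
  have hj := Real.concaveOn_negMulLog.le_map_sum (t := Finset.univ)
    (w := fun _ : d => (N : ℝ)⁻¹) (p := hA.1.1.eigenvalues)
    (fun _ _ => by positivity)
    (by rw [Finset.sum_const, Finset.card_univ, ← hN, nsmul_eq_mul]; field_simp)
    (fun i _ => hA.1.eigenvalues_nonneg i)
  have hsum : ∑ i, (N : ℝ)⁻¹ • hA.1.1.eigenvalues i = (N : ℝ)⁻¹ := by
    rw [← Finset.smul_sum, density_sum_eigenvalues_eq_one hA, smul_eq_mul, mul_one]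
  rw [hsum] at hj
  have hval : Real.negMulLog ((N : ℝ)⁻¹) = (N : ℝ)⁻¹ * Real.log N := by
    rw [Real.negMulLog, Real.log_inv]; ring
  rw [hval] at hj
  have hj' : (N : ℝ)⁻¹ * (∑ i, Real.negMulLog (hA.1.1.eigenvalues i))
      ≤ (N : ℝ)⁻¹ * Real.log N := by
    calc (N : ℝ)⁻¹ * (∑ i, Real.negMulLog (hA.1.1.eigenvalues i))
        = ∑ i, (N : ℝ)⁻¹ • Real.negMulLog (hA.1.1.eigenvalues i) := by
          rw [← Finset.smul_sum]; rfl
      _ ≤ (N : ℝ)⁻¹ * Real.log N := hj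
  exact le_of_mul_le_mul_left (by simpa [mul_comm] using hj') (by positivity)

lemma isHermitian_real_smul_one (c : ℝ) :
    ((c : ℂ) • (1 : Matrix d d ℂ)).IsHermitian := by
  unfold Matrix.IsHermitian
  rw [conjTranspose_smul, conjTranspose_one, Complex.star_def, Complex.conj_ofReal]

lemma isDensity_uniform [Nonempty d] :
    IsDensity ((((Fintype.card d : ℝ)⁻¹ : ℝ) : ℂ) • (1 : Matrix d d ℂ)) := by
  have hN0 : 0 < (Fintype.card d : ℝ) := by exact_mod_cast (Fintype.card_pos (α := d))
  refine ⟨psd_smul' (by positivity) Matrix.PosSemidef.one, ?_⟩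
  rw [trace_smul, trace_one, smul_eq_mul]
  have : ((Fintype.card d : ℝ) : ℂ) ≠ 0 := by exact_mod_cast hN0.ne'
  rw [show ((Fintype.card d : ℂ)) = (((Fintype.card d : ℝ)) : ℂ) by push_cast; ring]
  push_cast
  field_simp

lemma vnEntropy_uniform [Nonempty d] :
    vnEntropy ((((Fintype.card d : ℝ)⁻¹ : ℝ) : ℂ) • (1 : Matrix d d ℂ))
      = Real.log (Fintype.card d) := by
  set N := Fintype.card d with hNdef
  have hN0 : 0 < (N : ℝ) := by exact_mod_cast (Fintype.card_pos (α := d))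
  have hherm := isHermitian_real_smul_one (d := d) ((N : ℝ)⁻¹)
  have hfact : ∀ k, hherm.eigenvalues k = (N : ℝ)⁻¹ := by
    intro k
    have h := hherm.conjStarAlgAut_star_eigenvectorUnitary
    rw [Unitary.conjStarAlgAut_star_apply] at h
    rw [Matrix.mul_smul, Matrix.smul_mul, mul_one,
      Matrix.mem_unitaryGroup_iff'.mp hherm.eigenvectorUnitary.2] at h
    have h2 := congrFun (congrFun h k) k
    simp only [Matrix.smul_apply, Matrix.one_apply_eq, diagonal_apply_eq,
      Function.comp_apply, smul_eq_mul, mul_one] at h2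
    exact (Complex.ofReal_injective h2).symm
  rw [vnEntropy_eq_sum_negMulLog hherm]
  simp only [hfact]
  rw [Finset.sum_const, Finset.card_univ, Real.negMulLog, Real.log_inv]
  rw [show (Fintype.card d) = N from rfl]
  rw [nsmul_eq_mul]
  field_simp

lemma psd_trace_eq_re {M : Matrix d d ℂ} (hM : M.PosSemidef) :
    M.trace = ((M.trace).re : ℂ) := by
  rw [trace_eq_sum_eigenvalues hM.1]
  push_cast
  simp

lemma psd_trace_re_nonneg {M : Matrix d d ℂ} (hM : M.PosSemidef) : 0 ≤ (M.trace).re := by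
  rw [trace_eq_sum_eigenvalues hM.1]
  push_cast
  simp only [Complex.re_sum, Complex.ofReal_re]
  exact Finset.sum_nonneg fun i _ => hM.eigenvalues_nonneg i

lemma psd_trace_zero {M : Matrix d d ℂ} (hM : M.PosSemidef) (h : M.trace = 0) : M = 0 := by
  have hsum : ∑ i, hM.1.eigenvalues i = 0 := by
    have := (trace_eq_sum_eigenvalues hM.1).symm.trans h
    exact_mod_cast this
  have hz : ∀ i, hM.1.eigenvalues i = 0 := by
    intro i
    have := (Finset.sum_eq_zero_iff_of_nonneg
      (fun j _ => hM.eigenvalues_nonneg j)).mp hsum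
    exact this i (Finset.mem_univ i)
  have := hM.1.spectral_theorem
  rw [show diagonal (RCLike.ofReal ∘ hM.1.eigenvalues) = (0 : Matrix d d ℂ) by
      ext i j
      by_cases hij : i = j
      · subst hij; simp [hz]
      · simp [diagonal_apply_ne _ hij]] at this
  rw [this, map_zero]

section Kraus
variable {n r : ℕ} {E : Fin r → Matrix (Fin n) (Fin n) ℂ}

lemma krausChannel_psd {ρ : Matrix (Fin n) (Fin n) ℂ} (hρ : ρ.PosSemidef) :
    (krausChannel E ρ).PosSemidef :=
  psd_sum' _ _ fun k _ => hρ.mul_mul_conjTranspose_same (E k)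

lemma krausChannel_trace (hE : ∑ k, (E k)ᴴ * E k = 1) (ρ : Matrix (Fin n) (Fin n) ℂ) :
    (krausChannel E ρ).trace = ρ.trace := by
  rw [krausChannel, trace_sum]
  have h1 : ∀ k, (E k * ρ * (E k)ᴴ).trace = ((E k)ᴴ * E k * ρ).trace := by
    intro k
    rw [trace_mul_cycle, mul_assoc]
  rw [Finset.sum_congr rfl fun k _ => h1 k, ← trace_sum, ← Finset.sum_mul, hE, one_mul]

lemma krausChannel_isDensity (hE : ∑ k, (E k)ᴴ * E k = 1) {ρ : Matrix (Fin n) (Fin n) ℂ}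
    (hρ : IsDensity ρ) : IsDensity (krausChannel E ρ) :=
  ⟨krausChannel_psd hρ.1, by rw [krausChannel_trace hE, hρ.2]⟩

lemma krausChannel_smul (c : ℂ) (ρ : Matrix (Fin n) (Fin n) ℂ) :
    krausChannel E (c • ρ) = c • krausChannel E ρ := by
  rw [krausChannel, krausChannel, Finset.smul_sum]
  exact Finset.sum_congr rfl fun k _ => by
    rw [Matrix.mul_smul, Matrix.smul_mul]

end Kraus

section Pauli
variable {n : ℕ} [NeZero n]
open Fin.CommRing

lemma shiftT_pow_apply (m : ℕ) (i j : Fin n) :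
    (shiftT n ^ m) i j = if i = j + (m : Fin n) then 1 else 0 := by
  induction m generalizing i j with
  | zero => simp [Matrix.one_apply]
  | succ m ih =>
    rw [pow_succ', Matrix.mul_apply, Finset.sum_eq_single (i - 1)]
    · rw [show shiftT n i (i - 1) = 1 by simp [shiftT, sub_add_cancel], one_mul, ih]
      have key : (i - 1 = j + (m : Fin n)) ↔ (i = j + ((m + 1 : ℕ) : Fin n)) := by
        rw [Nat.cast_add, Nat.cast_one, sub_eq_iff_eq_add]
        constructor
        · intro h; rw [h]; ring
        · intro h; rw [h]; ring
      rw [if_congr key rfl rfl]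
    · intro b _ hb
      have hzero : shiftT n i b = 0 := by
        simp only [shiftT, of_apply, ite_eq_right_iff]
        intro h
        exact absurd (by rw [h]; ring : b = i - 1) hb
      rw [hzero, zero_mul]
    · intro h; exact absurd (Finset.mem_univ _) h

lemma shiftT_mem : shiftT n ∈ Matrix.unitaryGroup (Fin n) ℂ := by
  rw [Matrix.mem_unitaryGroup_iff']
  ext i j
  rw [Matrix.mul_apply, Matrix.one_apply, Finset.sum_eq_single (i + 1)]
  · have h1 : (star (shiftT n)) i (i + 1) = 1 := by
      simp [Matrix.star_apply, shiftT]
    rw [h1, one_mul]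
    simp [shiftT, add_left_inj]
  · intro b _ hb
    have hzero : (star (shiftT n)) i b = 0 := by
      simp only [Matrix.star_apply, shiftT, of_apply]
      rw [if_neg (by exact fun h => hb (by rw [h]))]
      exact star_zero _
    rw [hzero, zero_mul]
  · intro h; exact absurd (Finset.mem_univ _) h

lemma phaseR_mem : phaseR n ∈ Matrix.unitaryGroup (Fin n) ℂ := by
  rw [Matrix.mem_unitaryGroup_iff']
  ext i j
  simp only [phaseR, star_eq_conjTranspose, diagonal_conjTranspose, diagonal_mul_diagonal,
    diagonal_apply, Pi.mul_apply, Pi.star_apply, Matrix.one_apply]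
  by_cases hij : i = j
  · subst hij
    simp only [if_pos rfl]
    rw [RCLike.star_def, ← Complex.exp_conj, ← Complex.exp_add]
    rw [show (starRingEnd ℂ) (2 * Real.pi * Complex.I * (i : ℕ) / n)
        + 2 * Real.pi * Complex.I * (i : ℕ) / n = 0 by
      simp [map_div₀, map_ofNat]
      ring]
    exact Complex.exp_zero
  · simp [hij]

lemma genPauli_mem (md : Fin n × Fin n) : genPauli md ∈ Matrix.unitaryGroup (Fin n) ℂ :=
  mul_mem (pow_mem shiftT_mem _) (pow_mem phaseR_mem _)

lemma genPauli_apply (md : Fin n × Fin n) (a c : Fin n) :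
    genPauli md a c = (if a = c + md.1 then 1 else 0)
      * Complex.exp (2 * Real.pi * Complex.I * (c : ℕ) / n) ^ (md.2 : ℕ) := by
  rw [genPauli, phaseR, diagonal_pow, mul_diagonal, shiftT_pow_apply, Fin.cast_val_eq_self]
  rfl

lemma sum_phase (c e : Fin n) :
    ∑ dd : Fin n, (Complex.exp (2 * Real.pi * Complex.I * (c : ℕ) / n)
      * star (Complex.exp (2 * Real.pi * Complex.I * (e : ℕ) / n))) ^ (dd : ℕ)
      = if c = e then (n : ℂ) else 0 := by
  have hn0 : (n : ℂ) ≠ 0 := Nat.cast_ne_zero.mpr (NeZero.ne n)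
  set z : ℤ := ((c : ℕ) : ℤ) - ((e : ℕ) : ℤ) with hz
  have hζ : Complex.exp (2 * Real.pi * Complex.I * (c : ℕ) / n)
      * star (Complex.exp (2 * Real.pi * Complex.I * (e : ℕ) / n))
      = Complex.exp (2 * Real.pi * Complex.I * (z : ℂ) / n) := by
    rw [RCLike.star_def, ← Complex.exp_conj, ← Complex.exp_add]
    congr 1
    have hcj : (starRingEnd ℂ) (2 * Real.pi * Complex.I * (e : ℕ) / n)
        = -(2 * Real.pi * Complex.I * (e : ℕ) / n) := by
      simp [map_div₀, map_ofNat]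
      ring
    rw [hcj, hz]
    push_cast
    ring
  rw [Finset.sum_congr rfl fun dd _ => by rw [hζ]]
  by_cases hce : c = e
  · subst hce
    have hz0 : (z : ℂ) = 0 := by rw [hz]; push_cast; ring
    rw [if_pos rfl]
    simp [hz0, Finset.card_univ]
  · rw [if_neg hce]
    have hzne : z ≠ 0 := by
      intro h
      apply hce
      have hval : (c : ℕ) = (e : ℕ) := by omega
      exact Fin.val_injective hval
    have hzb : |z| < (n : ℤ) := by
      have hc := c.isLt
      have he := e.isLt
      rw [abs_lt]
      omega
    have hne1 : Complex.exp (2 * Real.pi * Complex.I * (z : ℂ) / n) ≠ 1 := by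
      intro h
      rw [Complex.exp_eq_one_iff] at h
      obtain ⟨k, hk⟩ := h
      have h4 : z = k * n := by
        field_simp at hk
        have h2' : (2 * (Real.pi : ℂ) * Complex.I) * (z : ℂ)
            = (2 * (Real.pi : ℂ) * Complex.I) * ((k : ℂ) * n) := by
          linear_combination (2 * (Real.pi : ℂ) * Complex.I) * hk
        have h2 := mul_left_cancel₀ Complex.two_pi_I_ne_zero h2'
        exact_mod_cast h2
      have hk0 : k ≠ 0 := by
        rintro rfl
        rw [zero_mul] at h4
        exact hzne h4
      have h1k : (1 : ℤ) ≤ |k| := Int.one_le_abs hk0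
      have habs : |z| = |k| * n := by
        rw [h4, abs_mul]
        congr 1
        exact abs_of_nonneg (by positivity)
      have hnz : (n : ℤ) ≤ |z| := by
        rw [habs]
        nlinarith [Int.natCast_pos.mpr (Nat.pos_of_ne_zero (NeZero.ne n))]
      omega
    have hpow : Complex.exp (2 * Real.pi * Complex.I * (z : ℂ) / n) ^ n = 1 := by
      rw [← Complex.exp_nat_mul]
      rw [show (n : ℂ) * (2 * Real.pi * Complex.I * (z : ℂ) / n)
          = (z : ℂ) * (2 * Real.pi * Complex.I) by field_simp]
      exact Complex.exp_int_mul_two_pi_mul_I z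
    rw [Fin.sum_univ_eq_sum_range
      (fun i => Complex.exp (2 * Real.pi * Complex.I * (z : ℂ) / n) ^ i) n]
    rw [geom_sum_eq hne1, hpow]
    simp

end Pauli

section Design
variable {n : ℕ} [NeZero n]
open Fin.CommRing

lemma genPauli_mul_apply (md : Fin n × Fin n) (M : Matrix (Fin n) (Fin n) ℂ) (a e : Fin n) :
    (genPauli md * M) a e
      = Complex.exp (2 * Real.pi * Complex.I * ((a - md.1 : Fin n) : ℕ) / n) ^ (md.2 : ℕ)
        * M (a - md.1) e := by
  rw [Matrix.mul_apply, Finset.sum_eq_single (a - md.1)]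
  · rw [genPauli_apply, if_pos (by rw [sub_add_cancel]), one_mul]
  · intro c _ hc
    rw [genPauli_apply, if_neg, zero_mul, zero_mul]
    intro h
    exact hc (by rw [h]; ring)
  · intro h; exact absurd (Finset.mem_univ _) h

lemma genPauli_conj_apply (md : Fin n × Fin n) (M : Matrix (Fin n) (Fin n) ℂ) (a b : Fin n) :
    (genPauli md * M * (genPauli md)ᴴ) a b
      = (Complex.exp (2 * Real.pi * Complex.I * ((a - md.1 : Fin n) : ℕ) / n) ^ (md.2 : ℕ)
          * star (Complex.exp (2 * Real.pi * Complex.I * ((b - md.1 : Fin n) : ℕ) / n)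
            ^ (md.2 : ℕ)))
        * M (a - md.1) (b - md.1) := by
  rw [Matrix.mul_apply, Finset.sum_eq_single (b - md.1)]
  · rw [conjTranspose_apply, genPauli_mul_apply, genPauli_apply,
      if_pos (by rw [sub_add_cancel]), one_mul]
    ring
  · intro e _ he
    rw [conjTranspose_apply, genPauli_apply, if_neg, zero_mul, star_zero, mul_zero]
    intro h
    exact he (by rw [h]; ring)
  · intro h; exact absurd (Finset.mem_univ _) h

lemma pauli_design (M : Matrix (Fin n) (Fin n) ℂ) :
    ∑ md : Fin n × Fin n, genPauli md * M * (genPauli md)ᴴ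
      = ((n : ℂ) * M.trace) • (1 : Matrix (Fin n) (Fin n) ℂ) := by
  ext a b
  rw [Matrix.sum_apply, Fintype.sum_prod_type]
  have hinner : ∀ m : Fin n,
      ∑ dd : Fin n, (genPauli (m, dd) * M * (genPauli (m, dd))ᴴ) a b
      = (if a - m = b - m then (n : ℂ) else 0) * M (a - m) (b - m) := by
    intro m
    rw [Finset.sum_congr rfl fun dd _ => genPauli_conj_apply (m, dd) M a b]
    dsimp only
    rw [← Finset.sum_mul]
    congr 1
    rw [← sum_phase (a - m) (b - m)]
    exact Finset.sum_congr rfl fun dd _ => by rw [mul_pow, star_pow]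
  rw [Finset.sum_congr rfl fun m _ => hinner m]
  by_cases hab : a = b
  · subst hab
    simp only [if_pos rfl]
    rw [Matrix.smul_apply, Matrix.one_apply_eq, smul_eq_mul, mul_one, ← Finset.mul_sum]
    congr 1
    rw [show M.trace = ∑ c, M c c from rfl]
    exact Fintype.sum_equiv (Equiv.subLeft a) (fun m => M (a - m) (a - m))
      (fun c => M c c) (fun m => rfl)
  · have hfalse : ∀ m : Fin n, ¬(a - m = b - m) := fun m h => hab (by
      have := sub_left_inj.mp h
      exact this)
    rw [Finset.sum_congr rfl fun m _ => by rw [if_neg (hfalse m), zero_mul]]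
    rw [Matrix.smul_apply, Matrix.one_apply_ne hab, smul_zero, Finset.sum_const, smul_zero]

end Design

section Blocks
variable {n r : ℕ} [NeZero n] {E : Fin r → Matrix (Fin n) (Fin n) ℂ}

lemma blockAt_psd {ρ : Matrix (Fin n × (Fin n × Fin n)) (Fin n × (Fin n × Fin n)) ℂ}
    (hρ : ρ.PosSemidef) (i : Fin n × Fin n) : (blockAt i ρ).PosSemidef :=
  hρ.submatrix (fun a => (a, i))

lemma sum_blockAt_trace (ρ : Matrix (Fin n × (Fin n × Fin n)) (Fin n × (Fin n × Fin n)) ℂ) :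
    ∑ i : Fin n × Fin n, (blockAt i ρ).trace = ρ.trace := by
  have h : ρ.trace = ∑ a : Fin n, ∑ i : Fin n × Fin n, ρ (a, i) (a, i) := by
    rw [Matrix.trace, Fintype.sum_prod_type]
    rfl
  rw [h]
  simp only [blockAt, Matrix.trace, Matrix.diag, of_apply]
  exact Finset.sum_comm

/-- The state `ρ ⊗ |i⟩⟨i|`. -/
noncomputable def bigKron (ρ : Matrix (Fin n) (Fin n) ℂ) (i : Fin n × Fin n) :
    Matrix (Fin n × (Fin n × Fin n)) (Fin n × (Fin n × Fin n)) ℂ :=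
  Matrix.of fun p q => if p.2 = i ∧ q.2 = i then ρ p.1 q.1 else 0

lemma bigKron_isDensity {ρ : Matrix (Fin n) (Fin n) ℂ} (hρ : IsDensity ρ)
    (i : Fin n × Fin n) : IsDensity (bigKron ρ i) := by
  refine ⟨Matrix.PosSemidef.of_dotProduct_mulVec_nonneg ?_ ?_, ?_⟩
  · ext p q
    simp only [conjTranspose_apply, bigKron, of_apply]
    by_cases h : p.2 = i ∧ q.2 = i
    · rw [if_pos ⟨h.2, h.1⟩, if_pos h]
      have := congrFun (congrFun hρ.1.1 p.1) q.1
      simpa [conjTranspose_apply] using this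
    · rw [if_neg (fun hh => h ⟨hh.2, hh.1⟩), if_neg h, star_zero]
  · intro x
    have hstep : ∀ p : Fin n × (Fin n × Fin n),
        (∑ q, (if p.2 = i ∧ q.2 = i then ρ p.1 q.1 else 0) * x q)
        = if p.2 = i then ∑ b, ρ p.1 b * x (b, i) else 0 := by
      intro p
      by_cases hp : p.2 = i
      · rw [if_pos hp, Fintype.sum_prod_type]
        refine Finset.sum_congr rfl fun b _ => ?_
        rw [Finset.sum_eq_single i]
        · rw [if_pos ⟨hp, rfl⟩]
        · intro l _ hl; rw [if_neg (fun hc => hl hc.2), zero_mul]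
        · intro h; exact absurd (Finset.mem_univ _) h
      · simp [hp]
    have hkey : star x ⬝ᵥ ((bigKron ρ i) *ᵥ x)
        = star (fun a => x (a, i)) ⬝ᵥ (ρ *ᵥ fun a => x (a, i)) := by
      simp only [dotProduct, mulVec, bigKron, of_apply, Pi.star_apply]
      rw [Finset.sum_congr rfl fun p _ => by rw [hstep p]]
      rw [Fintype.sum_prod_type]
      refine Finset.sum_congr rfl fun a _ => ?_
      rw [Finset.sum_eq_single i]
      · rw [if_pos rfl]
      · intro l _ hl; rw [if_neg hl, mul_zero]
      · intro h; exact absurd (Finset.mem_univ _) h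
    rw [hkey]
    exact hρ.1.dotProduct_mulVec_nonneg _
  · have : (bigKron ρ i).trace = ρ.trace := by
      simp only [Matrix.trace, Matrix.diag, bigKron, of_apply]
      rw [Fintype.sum_prod_type, Finset.sum_comm]
      rw [Finset.sum_eq_single i]
      · simp
      · intro l _ hl
        refine Finset.sum_eq_zero fun a _ => ?_
        rw [if_neg (fun hc => hl hc.1)]
      · intro h; exact absurd (Finset.mem_univ _) h
    rw [this, hρ.2]

lemma blockAt_bigKron (ρ : Matrix (Fin n) (Fin n) ℂ) (i j : Fin n × Fin n) :
    blockAt j (bigKron ρ i) = if j = i then ρ else 0 := by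
  ext a b
  simp only [blockAt, bigKron, of_apply]
  by_cases h : j = i
  · subst h; simp
  · simp [h]

lemma pauliMixChannel_bigKron (ρ : Matrix (Fin n) (Fin n) ℂ) (i : Fin n × Fin n) :
    pauliMixChannel E (bigKron ρ i) = genPauli i * krausChannel E ρ * (genPauli i)ᴴ := by
  rw [pauliMixChannel, Finset.sum_eq_single i]
  · rw [blockAt_bigKron, if_pos rfl]
  · intro j _ hj
    rw [blockAt_bigKron, if_neg hj]
    have h0 : krausChannel E (0 : Matrix (Fin n) (Fin n) ℂ) = 0 := by simp [krausChannel]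
    rw [h0, Matrix.mul_zero, Matrix.zero_mul]
  · intro h; exact absurd (Finset.mem_univ _) h

lemma pauliMixChannel_isDensity (hE : ∑ k, (E k)ᴴ * E k = 1)
    {ρ : Matrix (Fin n × (Fin n × Fin n)) (Fin n × (Fin n × Fin n)) ℂ}
    (hρ : IsDensity ρ) : IsDensity (pauliMixChannel E ρ) := by
  constructor
  · exact psd_sum' _ _ fun i _ =>
      (krausChannel_psd (blockAt_psd hρ.1 i)).mul_mul_conjTranspose_same (genPauli i)
  · rw [pauliMixChannel, trace_sum]
    rw [Finset.sum_congr rfl fun i _ => trace_conj (genPauli_mem i)]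
    rw [Finset.sum_congr rfl fun i _ => krausChannel_trace hE (blockAt i ρ)]
    rw [sum_blockAt_trace, hρ.2]

end Blocks

end Helpers




theorem holevo_of_pauli_mix_eq_log_sub_min_entropy
    {n r : ℕ} [NeZero n] (E : Fin r → Matrix (Fin n) (Fin n) ℂ)
    (hE : ∑ k, (E k)ᴴ * E k = 1) :
    holevoCap (pauliMixChannel E) =
      Real.log n - sInf {x : ℝ | ∃ ρ : Matrix (Fin n) (Fin n) ℂ,
        IsDensity ρ ∧ x = vnEntropy (krausChannel E ρ)} := by
  classical
  have hn0 : 0 < n := Nat.pos_of_ne_zero (NeZero.ne n)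
  haveI : Nonempty (Fin n) := ⟨⟨0, hn0⟩⟩
  have hcard : Fintype.card (Fin n) = n := Fintype.card_fin n
  set S := {x : ℝ | ∃ ρ : Matrix (Fin n) (Fin n) ℂ,
    IsDensity ρ ∧ x = vnEntropy (krausChannel E ρ)} with hSdef
  -- a uniform density to witness nonemptiness
  have hρ0 : IsDensity ((((n : ℝ)⁻¹ : ℝ) : ℂ) • (1 : Matrix (Fin n) (Fin n) ℂ)) := by
    have h := isDensity_uniform (d := Fin n)
    rwa [hcard] at h
  have hSne : S.Nonempty := ⟨_, ⟨_, hρ0, rfl⟩⟩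
  have hSlb : ∀ x ∈ S, (0 : ℝ) ≤ x := by
    rintro x ⟨ρ, hρ, rfl⟩
    exact vnEntropy_nonneg (krausChannel_isDensity hE hρ)
  have hSbdd : BddBelow S := ⟨0, hSlb⟩
  -- the converse bound: any output of the channel has entropy at least sInf S
  have hmain : ∀ ρbig : Matrix (Fin n × (Fin n × Fin n)) (Fin n × (Fin n × Fin n)) ℂ,
      IsDensity ρbig → sInf S ≤ vnEntropy (pauliMixChannel E ρbig) := by
    intro ρ hρ
    set q : Fin n × Fin n → ℝ := fun i => ((blockAt i ρ).trace).re with hqdef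
    have hqpsd : ∀ i, (blockAt i ρ).PosSemidef := fun i => blockAt_psd hρ.1 i
    have hq0 : ∀ i, 0 ≤ q i := fun i => psd_trace_re_nonneg (hqpsd i)
    have hqtr : ∀ i, (blockAt i ρ).trace = ((q i : ℝ) : ℂ) := fun i => psd_trace_eq_re (hqpsd i)
    have hq1 : ∑ i, q i = 1 := by
      have h1 : (∑ i : Fin n × Fin n, ((q i : ℝ) : ℂ)) = 1 := by
        calc ∑ i : Fin n × Fin n, ((q i : ℝ) : ℂ)
            = ∑ i : Fin n × Fin n, (blockAt i ρ).trace :=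
              Finset.sum_congr rfl fun i _ => (hqtr i).symm
          _ = ρ.trace := sum_blockAt_trace ρ
          _ = 1 := hρ.2
      exact_mod_cast h1
    set s : Finset (Fin n × Fin n) := Finset.univ.filter (fun i => q i ≠ 0) with hsdef
    set τ : Fin n × Fin n → Matrix (Fin n) (Fin n) ℂ :=
      fun i => genPauli i * krausChannel E ((((q i)⁻¹ : ℝ) : ℂ) • blockAt i ρ)
        * (genPauli i)ᴴ with hτdef
    have hσden : ∀ i ∈ s, IsDensity ((((q i)⁻¹ : ℝ) : ℂ) • blockAt i ρ) := by
      intro i hi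
      have hqi : q i ≠ 0 := (Finset.mem_filter.mp hi).2
      refine ⟨psd_smul' (inv_nonneg.mpr (hq0 i)) (hqpsd i), ?_⟩
      rw [trace_smul, hqtr i, smul_eq_mul]
      rw [show (((q i)⁻¹ : ℝ) : ℂ) * ((q i : ℝ) : ℂ) = (((q i)⁻¹ * q i : ℝ) : ℂ) by
        push_cast; ring, inv_mul_cancel₀ hqi, Complex.ofReal_one]
    have hτden : ∀ i ∈ s, IsDensity (τ i) := fun i hi =>
      isDensity_conj (krausChannel_isDensity hE (hσden i hi)) (genPauli_mem i)
    have hsum1 : ∑ i ∈ s, q i = 1 := by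
      rw [hsdef, Finset.sum_filter_of_ne (fun i _ h => h)]
      exact hq1
    have hterm : ∀ i, genPauli i * krausChannel E (blockAt i ρ) * (genPauli i)ᴴ
        = ((q i : ℝ) : ℂ) • τ i := by
      intro i
      by_cases hqi : q i = 0
      · have hb0 : blockAt i ρ = 0 := psd_trace_zero (hqpsd i) (by rw [hqtr i, hqi]; simp)
        have h0 : krausChannel E (0 : Matrix (Fin n) (Fin n) ℂ) = 0 := by simp [krausChannel]
        rw [hb0, h0, Matrix.mul_zero, Matrix.zero_mul, hqi]
        simp
      · rw [hτdef]
        dsimp only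
        rw [krausChannel_smul, Matrix.mul_smul, Matrix.smul_mul, smul_smul]
        rw [show (((q i) : ℝ) : ℂ) * (((q i)⁻¹ : ℝ) : ℂ) = 1 by
          rw [show (((q i) : ℝ) : ℂ) * (((q i)⁻¹ : ℝ) : ℂ) = ((q i * (q i)⁻¹ : ℝ) : ℂ) by
            push_cast; ring, mul_inv_cancel₀ hqi, Complex.ofReal_one]]
        rw [one_smul]
    have hdecomp : pauliMixChannel E ρ = ∑ i ∈ s, ((q i : ℝ) : ℂ) • τ i := by
      rw [pauliMixChannel, Finset.sum_congr rfl fun i _ => hterm i]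
      rw [hsdef]
      exact (Finset.sum_filter_of_ne (fun i _ h => by
        intro hq'
        apply h
        rw [hq']
        simp)).symm
    have hconc := vnEntropy_mix s q τ (fun i _ => hq0 i) hsum1 hτden
    have hge : ∀ i ∈ s, sInf S ≤ vnEntropy (τ i) := by
      intro i hi
      have heq : vnEntropy (τ i)
          = vnEntropy (krausChannel E ((((q i)⁻¹ : ℝ) : ℂ) • blockAt i ρ)) :=
        vnEntropy_conj (krausChannel_isDensity hE (hσden i hi)) (genPauli_mem i)
      rw [heq]
      exact csInf_le hSbdd ⟨_, hσden i hi, rfl⟩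
    calc sInf S = (∑ i ∈ s, q i) * sInf S := by rw [hsum1, one_mul]
      _ = ∑ i ∈ s, q i * sInf S := Finset.sum_mul _ _ _
      _ ≤ ∑ i ∈ s, q i * vnEntropy (τ i) :=
          Finset.sum_le_sum fun i hi => mul_le_mul_of_nonneg_left (hge i hi) (hq0 i)
      _ ≤ vnEntropy (∑ i ∈ s, ((q i : ℝ) : ℂ) • τ i) := hconc
      _ = vnEntropy (pauliMixChannel E ρ) := by rw [← hdecomp]
  -- now work with the Holevo set
  rw [holevoCap]
  set A := {x : ℝ | ∃ (m : ℕ) (p : Fin m → ℝ)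
      (ρs : Fin m → Matrix (Fin n × (Fin n × Fin n)) (Fin n × (Fin n × Fin n)) ℂ),
    (∀ i, 0 ≤ p i) ∧ (∑ i, p i = 1) ∧ (∀ i, IsDensity (ρs i)) ∧
    x = vnEntropy (∑ i, (p i : ℂ) • pauliMixChannel E (ρs i))
      - ∑ i, p i * vnEntropy (pauliMixChannel E (ρs i))} with hAdef
  have hAble : ∀ x ∈ A, x ≤ Real.log n - sInf S := by
    rintro x ⟨m, p, ρs, hp0, hp1, hρs, rfl⟩
    have hmixden : IsDensity (∑ i, (p i : ℂ) • pauliMixChannel E (ρs i)) := by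
      constructor
      · exact psd_sum' _ _ fun i _ =>
          psd_smul' (hp0 i) (pauliMixChannel_isDensity hE (hρs i)).1
      · rw [trace_sum]
        rw [Finset.sum_congr rfl fun i _ => by
          rw [trace_smul, (pauliMixChannel_isDensity hE (hρs i)).2, smul_eq_mul, mul_one]]
        exact_mod_cast hp1
    have h1 : vnEntropy (∑ i, (p i : ℂ) • pauliMixChannel E (ρs i)) ≤ Real.log n := by
      have h := vnEntropy_le_log hmixden
      rwa [hcard] at h
    have h4 : sInf S ≤ ∑ i, p i * vnEntropy (pauliMixChannel E (ρs i)) := by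
      calc sInf S = ∑ i, p i * sInf S := by rw [← Finset.sum_mul, hp1, one_mul]
        _ ≤ _ := Finset.sum_le_sum fun i _ =>
            mul_le_mul_of_nonneg_left (hmain _ (hρs i)) (hp0 i)
    linarith
  have hAne : A.Nonempty := by
    haveI : Nonempty (Fin n × (Fin n × Fin n)) := inferInstance
    have hρu := isDensity_uniform (d := Fin n × (Fin n × Fin n))
    exact ⟨_, ⟨1, fun _ => 1, fun _ => _, fun _ => zero_le_one, by simp,
      fun _ => hρu, rfl⟩⟩
  have hAbdd : BddAbove A := ⟨Real.log n - sInf S, hAble⟩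
  have hach : ∀ x ∈ S, Real.log n - x ∈ A := by
    rintro x ⟨ρ, hρden, rfl⟩
    have hΦden := krausChannel_isDensity hE hρden
    have hΨ : ∀ i : Fin (n * n),
        pauliMixChannel E (bigKron ρ (finProdFinEquiv.symm i))
        = genPauli (finProdFinEquiv.symm i) * krausChannel E ρ
          * (genPauli (finProdFinEquiv.symm i))ᴴ := fun i => pauliMixChannel_bigKron ρ _
    have hHterm : ∀ i : Fin (n * n),
        vnEntropy (pauliMixChannel E (bigKron ρ (finProdFinEquiv.symm i)))
        = vnEntropy (krausChannel E ρ) := by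
      intro i
      rw [hΨ i]
      exact vnEntropy_conj hΦden (genPauli_mem _)
    have hnn0 : ((n * n : ℕ) : ℝ) ≠ 0 := by positivity
    refine ⟨n * n, fun _ => ((n * n : ℕ) : ℝ)⁻¹,
      fun i => bigKron ρ (finProdFinEquiv.symm i), fun i => by positivity, ?_, ?_, ?_⟩
    · rw [Finset.sum_const, Finset.card_univ, Fintype.card_fin, nsmul_eq_mul]
      field_simp
    · intro i
      exact bigKron_isDensity hρden _
    · have hmix : (∑ i : Fin (n * n),
          ((((n * n : ℕ) : ℝ)⁻¹ : ℝ) : ℂ) • pauliMixChannel E (bigKron ρ (finProdFinEquiv.symm i)))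
          = (((n : ℝ)⁻¹ : ℝ) : ℂ) • (1 : Matrix (Fin n) (Fin n) ℂ) := by
        rw [Finset.sum_congr rfl fun i _ => by rw [hΨ i]]
        rw [← Finset.smul_sum]
        rw [show (∑ i : Fin (n * n), genPauli (finProdFinEquiv.symm i) * krausChannel E ρ
            * (genPauli (finProdFinEquiv.symm i))ᴴ)
            = ∑ md : Fin n × Fin n, genPauli md * krausChannel E ρ * (genPauli md)ᴴ from
          Fintype.sum_equiv finProdFinEquiv.symm _ _ (fun i => rfl)]
        rw [pauli_design, krausChannel_trace hE, hρden.2, mul_one, smul_smul]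
        congr 1
        push_cast
        have : (n : ℂ) ≠ 0 := Nat.cast_ne_zero.mpr hn0.ne'
        field_simp
      have hHmix : vnEntropy ((((n : ℝ)⁻¹ : ℝ) : ℂ) • (1 : Matrix (Fin n) (Fin n) ℂ))
          = Real.log n := by
        have h := vnEntropy_uniform (d := Fin n)
        rwa [hcard] at h
      rw [hmix, hHmix]
      rw [Finset.sum_congr rfl fun i _ => by rw [hHterm i]]
      rw [Finset.sum_const, Finset.card_univ, Fintype.card_fin, nsmul_eq_mul]
      congr 1
      field_simp
  refine le_antisymm (csSup_le hAne hAble) ?_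
  have hlow : Real.log n - sSup A ≤ sInf S := by
    refine le_csInf hSne fun x hx => ?_
    have := le_csSup hAbdd (hach x hx)
    linarith
  linarith
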